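/- Let H be a Hopf algebra over a field k with bijective antipode S, and let λ : H → k be a nonzero left integral for H in H⁎, i.e. h₁·λ(h₂) = λ(h)·1 for all h ∈ H. Assume the map H → H⁎, h ↦ λ ↼ h, is injective, and let χ : H → H be a map satisfying h ⇀ λ = λ ↼ χ(h) for all h ∈ H, i.e. λ(x·h) = λ(χ(h)·x) for all x, h ∈ H (the generalized Nakayama automorphism). Set α := ε ∘ χ. Then χ(h) = α(h₂)·S⁻²(h₁) for all h ∈ H. -/

import Mathlib

/-!
Helper definitions for Sweedler-notation expressions in a Hopf algebra `H` over a field `k`.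
-/

open TensorProduct

variable {k H : Type*} [Field k] [Ring H] [HopfAlgebra k H]

/-- `swl f h = f(h₁) • h₂` in Sweedler notation. -/
noncomputable def swl (f : H →ₗ[k] k) : H →ₗ[k] H :=
  (TensorProduct.lid k H).toLinearMap ∘ₗ (f.rTensor H) ∘ₗ Coalgebra.comul

/-- `swr f h = f(h₂) • h₁` in Sweedler notation. -/
noncomputable def swr (f : H →ₗ[k] k) : H →ₗ[k] H :=
  (TensorProduct.rid k H).toLinearMap ∘ₗ (f.lTensor H) ∘ₗ Coalgebra.comul

/-- `sw2 f g h = f(h₁) * g(h₂)`, an element of `H`, in Sweedler notation. -/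
noncomputable def sw2 (f g : H →ₗ[k] H) : H →ₗ[k] H :=
  (LinearMap.mul' k H) ∘ₗ (TensorProduct.map f g) ∘ₗ Coalgebra.comul

/-- `sw2k f g h = f(h₁) * g(h₂)`, a scalar, in Sweedler notation. -/
noncomputable def sw2k (f g : H →ₗ[k] k) : H →ₗ[k] k :=
  (LinearMap.mul' k k) ∘ₗ (TensorProduct.map f g) ∘ₗ Coalgebra.comul

/-- `comul3 h = (h₁ ⊗ h₂) ⊗ h₃`, the iterated comultiplication `(Δ ⊗ id)Δ`. -/
noncomputable def comul3 : H →ₗ[k] (H ⊗[k] H) ⊗[k] H :=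
  (LinearMap.rTensor H Coalgebra.comul) ∘ₗ Coalgebra.comul

/-- `sw3 f g e h = f(h₁) * g(h₂) * e(h₃)`, an element of `H`, in Sweedler notation. -/
noncomputable def sw3 (f g e : H →ₗ[k] H) : H →ₗ[k] H :=
  (LinearMap.mul' k H) ∘ₗ
    (TensorProduct.map ((LinearMap.mul' k H) ∘ₗ TensorProduct.map f g) e) ∘ₗ comul3

open Coalgebra LinearMap

section Auxiliary

lemma swr_repr (f : H →ₗ[k] k) {c : H} (r : Coalgebra.Repr k c (H × H)) :
    swr f c = ∑ i ∈ r.index, f (r.right i) • r.left i := by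
  simp only [swr, LinearMap.coe_comp, Function.comp_apply, LinearEquiv.coe_coe]
  rw [← r.eq]
  simp [map_sum]

lemma counit_sum_smul {V : Type*} [AddCommMonoid V] [Module k V]
    (F : H →ₗ[k] V) {a : H} (r : Coalgebra.Repr k a (H × H)) :
    ∑ i ∈ r.index, Coalgebra.counit (R := k) (r.left i) • F (r.right i) = F a := by
  have h1 : ∑ i ∈ r.index, Coalgebra.counit (R := k) (r.left i) • r.right i = a := by
    have := congrArg (TensorProduct.lid k H) (Coalgebra.sum_counit_tmul_eq r)
    simpa only [map_sum, TensorProduct.lid_tmul, one_smul] using this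
  calc ∑ i ∈ r.index, Coalgebra.counit (R := k) (r.left i) • F (r.right i)
      = F (∑ i ∈ r.index, Coalgebra.counit (R := k) (r.left i) • r.right i) := by
        simp [map_sum, map_smul]
    _ = F a := by rw [h1]

lemma integral_double (lam : H →ₗ[k] k) (hlaml : ∀ h : H, swr lam h = lam h • (1 : H))
    {c d : H} (rc : Coalgebra.Repr k c (H × H)) (rd : Coalgebra.Repr k d (H × H)) :
    ∑ m ∈ rc.index, ∑ j ∈ rd.index,
      lam (rc.right m * rd.right j) • (rc.left m * rd.left j) = lam (c * d) • (1 : H) := by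
  have hcom : Coalgebra.comul (R := k) (c * d) =
      ∑ m ∈ rc.index, ∑ j ∈ rd.index,
        (rc.left m * rd.left j) ⊗ₜ[k] (rc.right m * rd.right j) := by
    rw [Bialgebra.comul_mul, ← rc.eq, ← rd.eq, Finset.sum_mul_sum]
    simp [Algebra.TensorProduct.tmul_mul_tmul]
  have := hlaml (c * d)
  rw [swr] at this
  simp only [LinearMap.coe_comp, Function.comp_apply, LinearEquiv.coe_coe] at this
  rw [hcom] at this
  simpa [map_sum] using this

/-- The key identity: `λ(a·b₂) b₁ = λ(a₂·b) S(a₁)`. -/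
lemma star_lemma (lam : H →ₗ[k] k) (hlaml : ∀ h : H, swr lam h = lam h • (1 : H)) (a b : H) :
    swr (lam ∘ₗ LinearMap.mulLeft k a) b =
      HopfAlgebra.antipode (R := k) (swr (lam ∘ₗ LinearMap.mulRight k b) a) := by
  classical
  set S : H →ₗ[k] H := HopfAlgebra.antipode (R := k) with hS
  obtain ⟨ra⟩ : Nonempty (Coalgebra.Repr k a (H × H)) := ⟨ℛ k a⟩
  obtain ⟨rb⟩ : Nonempty (Coalgebra.Repr k b (H × H)) := ⟨ℛ k b⟩
  let rl : ∀ i, Coalgebra.Repr k (ra.left i) (H × H) := fun i => ℛ k (ra.left i)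
  let rr : ∀ i, Coalgebra.Repr k (ra.right i) (H × H) := fun i => ℛ k (ra.right i)
  -- the linear map Φ : x ⊗ (y ⊗ z) ↦ ∑ⱼ λ(z·b₍₂,ⱼ₎) • (S x * (y * b₍₁,ⱼ₎))
  let Φ : H ⊗[k] (H ⊗[k] H) →ₗ[k] H :=
    ∑ j ∈ rb.index,
      (LinearMap.mul' k H) ∘ₗ
        (TensorProduct.map S
          ((TensorProduct.rid k H).toLinearMap ∘ₗ
            (LinearMap.lTensor H (lam ∘ₗ LinearMap.mulRight k (rb.right j))) ∘ₗ
            (LinearMap.rTensor H (LinearMap.mulRight k (rb.left j)))))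
  have hΦ : ∀ x y z : H, Φ (x ⊗ₜ[k] (y ⊗ₜ[k] z)) =
      ∑ j ∈ rb.index, lam (z * rb.right j) • (S x * (y * rb.left j)) := by
    intro x y z
    simp [Φ, LinearMap.sum_apply, mul_smul_comm]
  have key := congrArg Φ (Coalgebra.sum_tmul_tmul_eq ra rl rr)
  simp only [map_sum, hΦ] at key
  -- evaluate the left-hand side
  have lhs_eq : ∑ i ∈ ra.index, ∑ m ∈ (rl i).index, ∑ j ∈ rb.index,
      lam (ra.right i * rb.right j) • (S ((rl i).left m) * ((rl i).right m * rb.left j)) =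
      swr (lam ∘ₗ LinearMap.mulLeft k a) b := by
    have step1 : ∀ i ∈ ra.index, ∑ m ∈ (rl i).index, ∑ j ∈ rb.index,
        lam (ra.right i * rb.right j) • (S ((rl i).left m) * ((rl i).right m * rb.left j)) =
        Coalgebra.counit (R := k) (ra.left i) •
          ∑ j ∈ rb.index, lam (ra.right i * rb.right j) • rb.left j := by
      intro i _
      rw [Finset.sum_comm]
      have inner : ∀ j ∈ rb.index,
          ∑ m ∈ (rl i).index,
            lam (ra.right i * rb.right j) • (S ((rl i).left m) * ((rl i).right m * rb.left j)) =
          Coalgebra.counit (R := k) (ra.left i) •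
            (lam (ra.right i * rb.right j) • rb.left j) := by
        intro j _
        rw [← Finset.smul_sum]
        have : ∑ m ∈ (rl i).index, S ((rl i).left m) * ((rl i).right m * rb.left j) =
            Coalgebra.counit (R := k) (ra.left i) • rb.left j := by
          calc ∑ m ∈ (rl i).index, S ((rl i).left m) * ((rl i).right m * rb.left j)
              = (∑ m ∈ (rl i).index, S ((rl i).left m) * (rl i).right m) * rb.left j := by
                rw [Finset.sum_mul]; simp [mul_assoc]
            _ = Coalgebra.counit (R := k) (ra.left i) • rb.left j := by
                rw [HopfAlgebra.sum_antipode_mul_eq_smul (rl i)]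
                simp [smul_mul_assoc]
        rw [this, smul_comm]
      rw [Finset.sum_congr rfl inner, ← Finset.smul_sum]
    rw [Finset.sum_congr rfl step1]
    -- now use the counit identity
    let F : H →ₗ[k] H :=
      ∑ j ∈ rb.index, (lam ∘ₗ LinearMap.mulRight k (rb.right j)).smulRight (rb.left j)
    have hF : ∀ c : H, F c = ∑ j ∈ rb.index, lam (c * rb.right j) • rb.left j := by
      intro c; simp [F, LinearMap.sum_apply]
    calc ∑ i ∈ ra.index, Coalgebra.counit (R := k) (ra.left i) •
          ∑ j ∈ rb.index, lam (ra.right i * rb.right j) • rb.left j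
        = ∑ i ∈ ra.index, Coalgebra.counit (R := k) (ra.left i) • F (ra.right i) := by
          refine Finset.sum_congr rfl fun i _ => ?_
          rw [hF]
      _ = F a := counit_sum_smul F ra
      _ = swr (lam ∘ₗ LinearMap.mulLeft k a) b := by
          rw [swr_repr _ rb, hF]
          simp
  have rhs_eq : ∑ i ∈ ra.index, ∑ m ∈ (rr i).index, ∑ j ∈ rb.index,
      lam ((rr i).right m * rb.right j) • (S (ra.left i) * ((rr i).left m * rb.left j)) =
      S (swr (lam ∘ₗ LinearMap.mulRight k b) a) := by
    have step2 : ∀ i ∈ ra.index, ∑ m ∈ (rr i).index, ∑ j ∈ rb.index,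
        lam ((rr i).right m * rb.right j) • (S (ra.left i) * ((rr i).left m * rb.left j)) =
        lam (ra.right i * b) • S (ra.left i) := by
      intro i _
      have : ∑ m ∈ (rr i).index, ∑ j ∈ rb.index,
          lam ((rr i).right m * rb.right j) • (S (ra.left i) * ((rr i).left m * rb.left j)) =
          S (ra.left i) * ∑ m ∈ (rr i).index, ∑ j ∈ rb.index,
            lam ((rr i).right m * rb.right j) • ((rr i).left m * rb.left j) := by
        rw [Finset.mul_sum]
        refine Finset.sum_congr rfl fun m _ => ?_
        rw [Finset.mul_sum]
        refine Finset.sum_congr rfl fun j _ => ?_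
        rw [mul_smul_comm]
      rw [this, integral_double lam hlaml (rr i) rb, mul_smul_comm, mul_one]
    rw [Finset.sum_congr rfl step2, swr_repr _ ra, map_sum]
    refine Finset.sum_congr rfl fun i _ => ?_
    rw [map_smul]
    simp
  rw [lhs_eq, rhs_eq] at key
  exact key

lemma contract₁ (f : H →ₗ[k] k) (t : H ⊗[k] H) :
    TensorProduct.lid k H (f.rTensor H (TensorProduct.comm k H H t)) =
    TensorProduct.rid k H (f.lTensor H t) := by
  induction t using TensorProduct.induction_on with
  | zero => simp
  | tmul a b => simp
  | add x y hx hy => simp [map_add, hx, hy]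

lemma contract₂ (f : H →ₗ[k] k) (g₁ g₂ : H →ₗ[k] H) (t : H ⊗[k] H) :
    TensorProduct.lid k H (f.rTensor H ((TensorProduct.map g₁ g₂) (TensorProduct.comm k H H t))) =
    g₂ (TensorProduct.rid k H ((f ∘ₗ g₁).lTensor H t)) := by
  induction t using TensorProduct.induction_on with
  | zero => simp
  | tmul a b => simp
  | add x y hx hy => simp only [map_add, hx, hy]

lemma contract_comm (f g : H →ₗ[k] k) (t : H ⊗[k] H) :
    f (TensorProduct.rid k H (g.lTensor H t)) =
    g (TensorProduct.lid k H (f.rTensor H t)) := by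
  induction t using TensorProduct.induction_on with
  | zero => simp
  | tmul a b => simp [mul_comm]
  | add x y hx hy => simp [map_add, hx, hy]

lemma tensor_eq_of_forall (lam : H →ₗ[k] k)
    (hinj : Function.Injective (fun h : H => lam ∘ₗ LinearMap.mulLeft k h))
    {t u : H ⊗[k] H}
    (hev : ∀ x : H,
      TensorProduct.lid k H ((lam ∘ₗ LinearMap.mulRight k x).rTensor H t) =
      TensorProduct.lid k H ((lam ∘ₗ LinearMap.mulRight k x).rTensor H u)) : t = u := by
  classical
  let b := Module.Basis.ofVectorSpace k H
  let E := (TensorProduct.congr (LinearEquiv.refl k H) b.repr).trans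
    (TensorProduct.finsuppScalarRight k k H _)
  apply E.injective
  ext i
  set g : H →ₗ[k] k := (Finsupp.lapply i : (_ →₀ k) →ₗ[k] k) ∘ₗ b.repr.toLinearMap with hg
  have hcomp : ∀ s : H ⊗[k] H, E s i = TensorProduct.rid k H (g.lTensor H s) := by
    intro s
    induction s using TensorProduct.induction_on with
    | zero => simp
    | tmul a c => simp [E, g]
    | add x y hx hy => simp [map_add, hx, hy]
  rw [hcomp t, hcomp u]
  have key : ∀ x : H,
      (lam ∘ₗ LinearMap.mulLeft k (TensorProduct.rid k H (g.lTensor H t))) x =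
      (lam ∘ₗ LinearMap.mulLeft k (TensorProduct.rid k H (g.lTensor H u))) x := by
    intro x
    have h1 := contract_comm (lam ∘ₗ LinearMap.mulRight k x) g t
    have h2 := contract_comm (lam ∘ₗ LinearMap.mulRight k x) g u
    simp only [LinearMap.coe_comp, Function.comp_apply, LinearMap.mulRight_apply] at h1 h2
    simp only [LinearMap.coe_comp, Function.comp_apply, LinearMap.mulLeft_apply]
    rw [h1, h2, hev x]
  exact hinj (LinearMap.ext key)

end Auxiliary

/-- `H` Hopf algebra over `k` with bijective antipode `S` (linear inverse
`S'`), `λ ≠ 0` a left integral for `H` in `H⁎` (`h₁·λ(h₂) = λ(h)·1`), with `h ↦ λ ↼ h`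
injective, and `χ` the generalized Nakayama automorphism: `λ(x·h) = λ(χ(h)·x)`.
With `α := ε ∘ χ`, one has `χ(h) = α(h₂)·S⁻²(h₁)` for all `h`. -/
theorem statement5
    (S' : H →ₗ[k] H)
    (hS'l : ∀ x : H, S' (HopfAlgebra.antipode (R := k) x) = x)
    (hS'r : ∀ x : H, HopfAlgebra.antipode (R := k) (S' x) = x)
    (lam : H →ₗ[k] k) (hlam0 : lam ≠ 0)
    (hlaml : ∀ h : H, swr lam h = lam h • (1 : H))
    (hinj : Function.Injective (fun h : H => lam ∘ₗ LinearMap.mulLeft k h))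
    (χ : H →ₗ[k] H)
    (hχ : ∀ x h : H, lam (x * h) = lam (χ h * x)) :
    ∀ h : H, χ h = S' (S' (swr (Coalgebra.counit (R := k) ∘ₗ χ) h)) := by
  intro h
  have f1 : ∀ g : H, lam ∘ₗ LinearMap.mulRight k g = lam ∘ₗ LinearMap.mulLeft k (χ g) := by
    intro g
    exact LinearMap.ext fun x => by
      simp only [LinearMap.coe_comp, Function.comp_apply, LinearMap.mulRight_apply,
        LinearMap.mulLeft_apply]
      exact hχ x g
  have f2 : ∀ x : H, lam ∘ₗ LinearMap.mulLeft k x = (lam ∘ₗ LinearMap.mulRight k x) ∘ₗ χ := by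
    intro x
    exact LinearMap.ext fun g => by
      simp only [LinearMap.coe_comp, Function.comp_apply, LinearMap.mulRight_apply,
        LinearMap.mulLeft_apply]
      exact hχ x g
  have star' : ∀ a b : H, swr (lam ∘ₗ LinearMap.mulRight k b) a =
      S' (swr (lam ∘ₗ LinearMap.mulLeft k a) b) := by
    intro a b
    rw [← hS'l ((swr (lam ∘ₗ LinearMap.mulRight k b)) a), star_lemma lam hlaml a b]
  have chainE : ∀ x : H, swr (lam ∘ₗ LinearMap.mulRight k x) (χ h) =
      S' (S' (swr ((lam ∘ₗ LinearMap.mulRight k x) ∘ₗ χ) h)) := by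
    intro x
    rw [star' (χ h) x, ← f1 h, star' x h, f2 x]
  have huv : TensorProduct.comm k H H (Coalgebra.comul (R := k) (χ h)) =
      TensorProduct.map χ (S' ∘ₗ S')
        (TensorProduct.comm k H H (Coalgebra.comul (R := k) h)) := by
    apply tensor_eq_of_forall lam hinj
    intro x
    rw [contract₁, contract₂]
    have := chainE x
    simp only [swr, LinearMap.coe_comp, Function.comp_apply, LinearEquiv.coe_coe] at this ⊢
    simpa using this
  have final := congrArg
    (fun t => TensorProduct.lid k H
      ((Coalgebra.counit (R := k) (A := H)).rTensor H t)) huv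
  rw [contract₁, contract₂] at final
  rw [Coalgebra.lTensor_counit_comul] at final
  simp only [TensorProduct.rid_tmul, one_smul] at final
  rw [final]
  simp [swr]
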